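/- Let p be a natural number and α range over {1, …, P}. Let C_α : ℝ → ℝ be differentiable functions, let μ_α ∈ ℝ and n^α ∈ ℝᵖ and c_α ∈ ℝ be constants, let U ⊆ ℝᵖ be open, and let f : U → ℝ be a differentiable function satisfying the constraint Σ_{α=1}^{P} μ_α C_α(μ_α f(q) + ⟨n^α, q⟩ + c_α) = 0 for all q ∈ U. Define G_j : U → ℝ by G_j(q) = Σ_{α=1}^{P} n^α_j C_α(μ_α f(q) + ⟨n^α, q⟩ + c_α). Then for all j, l ∈ {1, …, p} and all q ∈ U: (∂G_j/∂q^l)(q) = (∂G_l/∂q^j)(q). -/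

import Mathlib

/-- Symmetry of the partial derivatives of the reduced capacitor terms
G_j(q) = Σ_α n^α_j C_α(μ_α f(q) + ⟨n^α,q⟩ + c_α), where f is the implicitly defined
function satisfying the constraint Σ_α μ_α C_α(μ_α f(q) + ⟨n^α,q⟩ + c_α) = 0 on U. -/
theorem reduced_capacitor_form_closed (p P : ℕ)
    (C : Fin P → ℝ → ℝ) (hC : ∀ α, Differentiable ℝ (C α))
    (μ : Fin P → ℝ) (n : Fin P → Fin p → ℝ) (c : Fin P → ℝ)
    (U : Set (Fin p → ℝ)) (hU : IsOpen U)
    (f : (Fin p → ℝ) → ℝ) (hf : ∀ q ∈ U, DifferentiableAt ℝ f q)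
    (hcon : ∀ q ∈ U, ∑ α, μ α * C α (μ α * f q + (∑ i, n α i * q i) + c α) = 0) :
    ∀ (j l : Fin p), ∀ q ∈ U,
      fderiv ℝ (fun q : Fin p → ℝ =>
          ∑ α, n α j * C α (μ α * f q + (∑ i, n α i * q i) + c α)) q (Pi.single l 1)
      = fderiv ℝ (fun q : Fin p → ℝ =>
          ∑ α, n α l * C α (μ α * f q + (∑ i, n α i * q i) + c α)) q (Pi.single j 1) := by
  intro j l q hq
  set D := fderiv ℝ f q with hD
  have hfd : HasFDerivAt f D q := (hf q hq).hasFDerivAt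
  set a : Fin P → ℝ := fun α => μ α * f q + (∑ i, n α i * q i) + c α with ha
  set d : Fin P → ℝ := fun α => deriv (C α) (a α) with hd
  set Lsum : Fin P → (Fin p → ℝ) →L[ℝ] ℝ :=
    fun α => ∑ i, n α i • (ContinuousLinearMap.proj i : ((Fin p → ℝ) →L[ℝ] ℝ)) with hLsum
  set L : Fin P → (Fin p → ℝ) →L[ℝ] ℝ := fun α => d α • (μ α • D + Lsum α) with hL
  have hg : ∀ α, HasFDerivAt (fun q : Fin p → ℝ => μ α * f q + (∑ i, n α i * q i) + c α)
      (μ α • D + Lsum α) q := by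
    intro α
    have h1 : HasFDerivAt (fun q : Fin p → ℝ => ∑ i, n α i * q i) (Lsum α) q := by
      apply HasFDerivAt.fun_sum
      intro i _
      exact ((ContinuousLinearMap.proj i : ((Fin p → ℝ) →L[ℝ] ℝ)).hasFDerivAt (x := q)).const_mul (n α i)
    exact ((hfd.const_mul (μ α)).add h1).add_const (c α)
  have hCg : ∀ α, HasFDerivAt (fun q : Fin p → ℝ => C α (μ α * f q + (∑ i, n α i * q i) + c α))
      (L α) q := by
    intro α
    exact ((hC α (a α)).hasDerivAt).comp_hasFDerivAt q (hg α)
  have hsum : ∀ (k : Fin p), HasFDerivAt (fun q : Fin p → ℝ =>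
      ∑ α, n α k * C α (μ α * f q + (∑ i, n α i * q i) + c α))
      (∑ α, n α k • L α) q := by
    intro k
    exact HasFDerivAt.fun_sum (fun α _ => (hCg α).const_mul (n α k))
  have hconD : HasFDerivAt (fun q : Fin p → ℝ =>
      ∑ α, μ α * C α (μ α * f q + (∑ i, n α i * q i) + c α))
      (∑ α, μ α • L α) q :=
    HasFDerivAt.fun_sum (fun α _ => (hCg α).const_mul (μ α))
  have hzero : (∑ α, μ α • L α) = 0 := by
    have heq : (fun q : Fin p → ℝ =>
        ∑ α, μ α * C α (μ α * f q + (∑ i, n α i * q i) + c α)) =ᶠ[nhds q] (fun _ => 0) :=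
      Filter.eventually_of_mem (hU.mem_nhds hq) (fun x hx => hcon x hx)
    have h1 : fderiv ℝ (fun q : Fin p → ℝ =>
        ∑ α, μ α * C α (μ α * f q + (∑ i, n α i * q i) + c α)) q = ∑ α, μ α • L α :=
      hconD.fderiv
    have h2 := heq.fderiv_eq (𝕜 := ℝ)
    rw [h1, fderiv_fun_const] at h2
    simpa using h2
  -- evaluation helper
  have heval : ∀ (α : Fin P) (k m : Fin p),
      (n α k • L α) (Pi.single m 1) = n α k * (d α * (μ α * D (Pi.single m 1) + n α m)) := by
    intro α k m
    have hLs : (Lsum α) (Pi.single m 1) = n α m := by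
      simp [hLsum, Pi.single_apply, Finset.sum_ite_eq', mul_comm]
    simp only [hL, ContinuousLinearMap.smul_apply, ContinuousLinearMap.add_apply,
      ContinuousLinearMap.smul_apply, hLs, smul_eq_mul]
  have hevalμ : ∀ (m : Fin p),
      ∑ α, μ α * (d α * (μ α * D (Pi.single m 1) + n α m)) = 0 := by
    intro m
    have := congrArg (fun (T : (Fin p → ℝ) →L[ℝ] ℝ) => T (Pi.single m 1)) hzero
    simp only [ContinuousLinearMap.zero_apply] at this
    rw [ContinuousLinearMap.sum_apply] at this
    calc ∑ α, μ α * (d α * (μ α * D (Pi.single m 1) + n α m))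
        = ∑ α, (μ α • L α) (Pi.single m 1) := by
          refine Finset.sum_congr rfl (fun α _ => ?_)
          have hLs : (Lsum α) (Pi.single m 1) = n α m := by
            simp [hLsum, Pi.single_apply, Finset.sum_ite_eq', mul_comm]
          simp only [hL, ContinuousLinearMap.smul_apply, ContinuousLinearMap.add_apply,
            hLs, smul_eq_mul]
      _ = 0 := this
  rw [(hsum j).fderiv, (hsum l).fderiv, ContinuousLinearMap.sum_apply,
    ContinuousLinearMap.sum_apply]
  set Dl := D (Pi.single l 1)
  set Dj := D (Pi.single j 1)
  have e1 : ∑ α, (n α j • L α) (Pi.single l 1)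
      = Dl * (∑ α, n α j * μ α * d α) + ∑ α, n α j * n α l * d α := by
    rw [Finset.mul_sum, ← Finset.sum_add_distrib]
    refine Finset.sum_congr rfl (fun α _ => ?_)
    rw [heval α j l]; ring
  have e2 : ∑ α, (n α l • L α) (Pi.single j 1)
      = Dj * (∑ α, n α l * μ α * d α) + ∑ α, n α j * n α l * d α := by
    rw [Finset.mul_sum, ← Finset.sum_add_distrib]
    refine Finset.sum_congr rfl (fun α _ => ?_)
    rw [heval α l j]; ring
  have c1 : Dl * (∑ α, μ α ^ 2 * d α) + (∑ α, n α l * μ α * d α) = 0 := by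
    have := hevalμ l
    rw [Finset.mul_sum, ← Finset.sum_add_distrib] at *
    rw [← this]
    exact Finset.sum_congr rfl (fun α _ => by ring)
  have c2 : Dj * (∑ α, μ α ^ 2 * d α) + (∑ α, n α j * μ α * d α) = 0 := by
    have := hevalμ j
    rw [Finset.mul_sum, ← Finset.sum_add_distrib] at *
    rw [← this]
    exact Finset.sum_congr rfl (fun α _ => by ring)
  rw [e1, e2]
  linear_combination Dl * c2 - Dj * c1
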